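/- Let S be a saturated Hopf C*-algebra and A a left Hopf ideal of S* with a bounded right σ(S*,S)-approximate identity. Then S* is unital and equals the σ(S*,S)-closure of A. -/

import Mathlib

open Filter Topology

/-- A (saturated) Hopf C*-algebra structure on a C*-algebra `S`, encoded through the
slice maps of the comultiplication `δ : S → M(S ⊗ S)`:
`sliceR f = (id ⊗ f) ∘ δ` and `sliceL f = (f ⊗ id) ∘ δ`.  The convolution product on
the dual `S*` is `f ★ g = (f ⊗ g) ∘ δ = f ∘ sliceR g = g ∘ sliceL f`.  Saturation is
encoded via its functional form: for every nonzero `S`-invariant subspace `N` of `S*`,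
the span of the slices `(id ⊗ g) δ(r)` (resp. `(g ⊗ id) δ(r)`), `g ∈ N`, `r ∈ S`, is
dense in `S`. -/
structure HopfCStarStructure (S : Type) [NonUnitalNormedRing S] [StarRing S] [CStarRing S]
    [NormedSpace ℂ S] [IsScalarTower ℂ S S] [SMulCommClass ℂ S S] [StarModule ℂ S]
    [CompleteSpace S] where
  sliceR : (S →L[ℂ] ℂ) →ₗ[ℂ] (S →L[ℂ] S)
  sliceL : (S →L[ℂ] ℂ) →ₗ[ℂ] (S →L[ℂ] S)
  norm_sliceR : ∀ (f : S →L[ℂ] ℂ) (r : S), ‖sliceR f r‖ ≤ ‖f‖ * ‖r‖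
  norm_sliceL : ∀ (f : S →L[ℂ] ℂ) (r : S), ‖sliceL f r‖ ≤ ‖f‖ * ‖r‖
  conv_eq : ∀ (f g : S →L[ℂ] ℂ) (r : S), f (sliceR g r) = g (sliceL f r)
  sliceR_conv : ∀ f g : S →L[ℂ] ℂ,
    (sliceR f).comp (sliceR g) = sliceR (f.comp (sliceR g))
  sliceL_conv : ∀ f g : S →L[ℂ] ℂ,
    (sliceL g).comp (sliceL f) = sliceL (f.comp (sliceR g))
  slice_comm : ∀ f g : S →L[ℂ] ℂ,
    (sliceL f).comp (sliceR g) = (sliceR g).comp (sliceL f)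
  saturatedR : ∀ N : Submodule ℂ (S →L[ℂ] ℂ), N ≠ ⊥ →
    (∀ f ∈ N, ∀ s : S, f.comp (ContinuousLinearMap.mul ℂ S s) ∈ N ∧
        f.comp ((ContinuousLinearMap.mul ℂ S).flip s) ∈ N) →
    Dense (↑(Submodule.span ℂ {x : S | ∃ f ∈ N, ∃ r : S, x = sliceR f r}) : Set S)
  saturatedL : ∀ N : Submodule ℂ (S →L[ℂ] ℂ), N ≠ ⊥ →
    (∀ f ∈ N, ∀ s : S, f.comp (ContinuousLinearMap.mul ℂ S s) ∈ N ∧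
        f.comp ((ContinuousLinearMap.mul ℂ S).flip s) ∈ N) →
    Dense (↑(Submodule.span ℂ {x : S | ∃ f ∈ N, ∃ r : S, x = sliceL f r}) : Set S)

/-- The convolution product `f ★ g = (f ⊗ g) ∘ δ` on the dual of a Hopf C*-algebra. -/
noncomputable def HopfCStarStructure.conv {S : Type} [NonUnitalNormedRing S] [StarRing S] [CStarRing S]
    [NormedSpace ℂ S] [IsScalarTower ℂ S S] [SMulCommClass ℂ S S] [StarModule ℂ S]
    [CompleteSpace S] (h : HopfCStarStructure S) (f g : S →L[ℂ] ℂ) : S →L[ℂ] ℂ :=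
  f.comp (h.sliceR g)

/-- Let `A` be a left Hopf ideal of `S*` with a bounded right
`σ(S*,S)`-approximate identity.  Then `S*` is unital and equals the
`σ(S*,S)`-closure of `A`. -/
theorem left_hopf_ideal_right_weakstar_approx_id
    (S : Type) [NonUnitalNormedRing S] [StarRing S] [CStarRing S]
    [NormedSpace ℂ S] [IsScalarTower ℂ S S] [SMulCommClass ℂ S S] [StarModule ℂ S]
    [CompleteSpace S] (h : HopfCStarStructure S)
    (A : Submodule ℂ (S →L[ℂ] ℂ)) (hA_ne : A ≠ ⊥)
    (hA_ideal : ∀ f : S →L[ℂ] ℂ, ∀ g ∈ A, h.conv f g ∈ A)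
    (hA_inv : ∀ f ∈ A, ∀ s : S, f.comp (ContinuousLinearMap.mul ℂ S s) ∈ A ∧
        f.comp ((ContinuousLinearMap.mul ℂ S).flip s) ∈ A)
    (ι : Type) (l : Filter ι) [l.NeBot] (f : ι → (S →L[ℂ] ℂ))
    (hmem : ∀ i, f i ∈ A) (hbdd : ∃ C : ℝ, ∀ i, ‖f i‖ ≤ C)
    (hright : ∀ g ∈ A, ∀ s : S, Tendsto (fun i => h.conv g (f i) s) l (𝓝 (g s))) :
    (∃ e : S →L[ℂ] ℂ, ∀ g : S →L[ℂ] ℂ, h.conv e g = g ∧ h.conv g e = g) ∧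
    (∀ (g : S →L[ℂ] ℂ) (F : Finset S) (ε : ℝ), 0 < ε →
      ∃ g' ∈ A, ∀ s ∈ F, ‖g s - g' s‖ < ε) := by
    classical
  obtain ⟨C0, hC0⟩ := hbdd
  set C : ℝ := max C0 1 with hCdef
  have hC1 : (1:ℝ) ≤ C := le_max_right _ _
  have hCpos : (0:ℝ) < C := lt_of_lt_of_le one_pos hC1
  have hC : ∀ i, ‖f i‖ ≤ C := fun i => (hC0 i).trans (le_max_left _ _)
  -- the dense sets of slices
  set YL : Set S := {x : S | ∃ g ∈ A, ∃ r : S, x = h.sliceL g r} with hYL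
  set YR : Set S := {x : S | ∃ g ∈ A, ∃ r : S, x = h.sliceR g r} with hYR
  have hdenseL : Dense (↑(Submodule.span ℂ YL) : Set S) := h.saturatedL A hA_ne hA_inv
  have hdenseR : Dense (↑(Submodule.span ℂ YR) : Set S) := h.saturatedR A hA_ne hA_inv
  -- pointwise convergence on slices
  have hslice : ∀ g ∈ A, ∀ r : S,
      Tendsto (fun i => f i (h.sliceL g r)) l (𝓝 (g r)) := by
    intro g hg r
    have := hright g hg r
    have heq : (fun i => h.conv g (f i) r) = fun i => f i (h.sliceL g r) := by
      funext i
      exact h.conv_eq g (f i) r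
    rwa [heq] at this
  -- convergence on the span
  have hspan : ∀ x ∈ Submodule.span ℂ YL, ∃ L : ℂ, Tendsto (fun i => f i x) l (𝓝 L) := by
    intro x hx
    induction hx using Submodule.span_induction with
    | mem x hxm =>
      obtain ⟨g, hg, r, rfl⟩ := hxm
      exact ⟨g r, hslice g hg r⟩
    | zero => exact ⟨0, by simpa using tendsto_const_nhds⟩
    | add x y hx hy ihx ihy =>
      obtain ⟨L1, h1⟩ := ihx
      obtain ⟨L2, h2⟩ := ihy
      exact ⟨L1 + L2, by simpa [map_add] using h1.add h2⟩
    | smul c x hx ihx =>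
      obtain ⟨L1, h1⟩ := ihx
      exact ⟨c * L1, by simpa [map_smul, smul_eq_mul] using h1.const_mul c⟩
  -- convergence everywhere, by a Cauchy argument
  have hconv : ∀ x : S, ∃ L : ℂ, Tendsto (fun i => f i x) l (𝓝 L) := by
    intro x
    have hc : Cauchy (Filter.map (fun i => f i x) l) := by
      rw [Metric.cauchy_iff]
      refine ⟨Filter.map_neBot, ?_⟩
      intro ε hε
      have hδ : (0:ℝ) < ε / (4 * C) := by positivity
      obtain ⟨x', hx'mem, hx'⟩ := hdenseL.exists_dist_lt x hδ
      obtain ⟨L, hL⟩ := hspan x' hx'mem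
      have hev : {i | dist (f i x') L < ε / 4} ∈ l := by
        have := (hL.eventually (Metric.ball_mem_nhds L (by positivity : (0:ℝ) < ε/4)))
        exact this
      refine ⟨(fun i => f i x) '' {i | dist (f i x') L < ε / 4}, ?_, ?_⟩
      · exact Filter.image_mem_map hev
      · rintro _ ⟨i, hi, rfl⟩ _ ⟨j, hj, rfl⟩
        have hbd : ∀ k : ι, dist (f k x) (f k x') ≤ ε / 4 := by
          intro k
          have h1 : dist (f k x) (f k x') = ‖f k (x - x')‖ := by
            rw [dist_eq_norm, ← map_sub]
          have h2 : ‖f k (x - x')‖ ≤ C * ‖x - x'‖ :=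
            le_trans ((f k).le_opNorm _) (by
              have := hC k
              have hn : (0:ℝ) ≤ ‖x - x'‖ := norm_nonneg _
              nlinarith)
          have h3 : ‖x - x'‖ < ε / (4 * C) := by
            rw [← dist_eq_norm]; exact hx'
          have h4 : C * ‖x - x'‖ ≤ C * (ε / (4 * C)) := by nlinarith [norm_nonneg (x - x')]
          have h5 : C * (ε / (4 * C)) = ε / 4 := by field_simp
          rw [h1]; nlinarith
        have t1 : dist (f i x) (f j x)
            ≤ dist (f i x) (f i x') + dist (f i x') (f j x') + dist (f j x') (f j x) :=
          dist_triangle4 _ _ _ _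
        have t2 : dist (f i x') (f j x') ≤ dist (f i x') L + dist L (f j x') :=
          dist_triangle _ _ _
        have hiL : dist (f i x') L < ε / 4 := hi
        have hjL : dist L (f j x') < ε / 4 := by rw [dist_comm]; exact hj
        have hxj : dist (f j x') (f j x) = dist (f j x) (f j x') := dist_comm _ _
        nlinarith [hbd i, hbd j]
    obtain ⟨L, hL⟩ := CompleteSpace.complete hc
    exact ⟨L, hL⟩
  choose E hE using hconv
  -- E is linear and bounded
  have hEadd : ∀ x y : S, E (x + y) = E x + E y := by
    intro x y
    have h1 : Tendsto (fun i => f i (x + y)) l (𝓝 (E x + E y)) := by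
      simpa [map_add] using (hE x).add (hE y)
    exact tendsto_nhds_unique (hE (x + y)) h1
  have hEsmul : ∀ (c : ℂ) (x : S), E (c • x) = c • E x := by
    intro c x
    have h1 : Tendsto (fun i => f i (c • x)) l (𝓝 (c * E x)) := by
      simpa [map_smul, smul_eq_mul] using (hE x).const_mul c
    simpa [smul_eq_mul] using tendsto_nhds_unique (hE (c • x)) h1
  have hEbound : ∀ x : S, ‖E x‖ ≤ C * ‖x‖ := by
    intro x
    refine le_of_tendsto (hE x).norm (Filter.Eventually.of_forall fun i => ?_)
    exact le_trans ((f i).le_opNorm x) (by nlinarith [hC i, norm_nonneg x])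
  set eLin : S →ₗ[ℂ] ℂ := { toFun := E, map_add' := hEadd, map_smul' := hEsmul } with heLin
  set e : S →L[ℂ] ℂ := eLin.mkContinuous C hEbound with he
  have heapp : ∀ x : S, e x = E x := fun x => rfl
  -- conv g e = g for g ∈ A
  have hA_unit : ∀ g ∈ A, h.conv g e = g := by
    intro g hg
    ext s
    have h1 : h.conv g e s = e (h.sliceL g s) := h.conv_eq g e s
    have h2 : Tendsto (fun i => f i (h.sliceL g s)) l (𝓝 (g s)) := hslice g hg s
    rw [h1, heapp]
    exact tendsto_nhds_unique (hE (h.sliceL g s)) h2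
  -- sliceL e = id
  have hsliceL_id : h.sliceL e = ContinuousLinearMap.id ℂ S := by
    refine ContinuousLinearMap.ext_on hdenseL ?_
    rintro x ⟨g, hg, r, rfl⟩
    have h1 : (h.sliceL e).comp (h.sliceL g) = h.sliceL (g.comp (h.sliceR e)) :=
      h.sliceL_conv g e
    have h2 : g.comp (h.sliceR e) = g := hA_unit g hg
    have h3 : (h.sliceL e).comp (h.sliceL g) = h.sliceL g := by rw [h1, h2]
    have := congrArg (fun T => T r) h3
    simpa using this
  -- e is a left unit
  have hleft : ∀ g : S →L[ℂ] ℂ, h.conv e g = g := by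
    intro g
    ext s
    have h1 : h.conv e g s = g (h.sliceL e s) := h.conv_eq e g s
    rw [h1, hsliceL_id]
    rfl
  -- sliceR e = id
  have hsliceR_id : h.sliceR e = ContinuousLinearMap.id ℂ S := by
    refine ContinuousLinearMap.ext_on hdenseR ?_
    rintro x ⟨g, hg, r, rfl⟩
    have h1 : (h.sliceR e).comp (h.sliceR g) = h.sliceR (e.comp (h.sliceR g)) :=
      h.sliceR_conv e g
    have h2 : e.comp (h.sliceR g) = g := hleft g
    have h3 : (h.sliceR e).comp (h.sliceR g) = h.sliceR g := by rw [h1, h2]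
    have := congrArg (fun T => T r) h3
    simpa using this
  -- e is a right unit
  have hrightu : ∀ g : S →L[ℂ] ℂ, h.conv g e = g := by
    intro g
    unfold HopfCStarStructure.conv
    rw [hsliceR_id]
    rfl
  constructor
  · exact ⟨e, fun g => ⟨hleft g, hrightu g⟩⟩
  · intro g F ε hε
    -- conv g (f i) ∈ A tends to g pointwise
    have hptwise : ∀ s : S, Tendsto (fun i => h.conv g (f i) s) l (𝓝 (g s)) := by
      intro s
      have h1 : (fun i => h.conv g (f i) s) = fun i => f i (h.sliceL g s) := by
        funext i; exact h.conv_eq g (f i) s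
      have h2 : e (h.sliceL g s) = g s := by
        rw [← h.conv_eq g e s, hsliceR_id]
        rfl
      rw [h1, ← h2, heapp]
      exact hE (h.sliceL g s)
    have hev : ∀ᶠ i in l, ∀ s ∈ F, ‖g s - h.conv g (f i) s‖ < ε := by
      rw [Filter.eventually_all_finset]
      intro s _
      have := (hptwise s).eventually (Metric.ball_mem_nhds (g s) hε)
      filter_upwards [this] with i hi
      have hd : dist (h.conv g (f i) s) (g s) < ε := by simpa [Metric.mem_ball] using hi
      rw [norm_sub_rev, ← dist_eq_norm]
      exact hd
    obtain ⟨i, hi⟩ := hev.exists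
    exact ⟨h.conv g (f i), hA_ideal g (f i) (hmem i), hi⟩
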